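/- arXiv:1307.2791 — 3 statements merged into one kernel-verified Lean document; each statement's English description precedes it below -/
import Mathlib

section
/- The function γ·y + β with γ = (|ȳ| − |y̲|)/(ȳ − y̲) and β = (ȳ·|y̲| − y̲·|ȳ|)/(ȳ − y̲) is the tightest linear overestimator of |y| on [y̲, ȳ]: if a·y + b ≥ |y| for all y ∈ [y̲, ȳ], then a·y + b ≥ γ·y + β for all y ∈ [y̲, ȳ]. -/
theorem stmt_2 (ylo yhi a b : ℝ) (hlt : ylo < yhi)
    (hover : ∀ y ∈ Set.Icc ylo yhi, |y| ≤ a * y + b) :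
    ∀ y ∈ Set.Icc ylo yhi,
      ((|yhi| - |ylo|) / (yhi - ylo)) * y +
        (yhi * |ylo| - ylo * |yhi|) / (yhi - ylo) ≤ a * y + b := by
  intro y hy
  have h1 := hover ylo ⟨le_refl _, hlt.le⟩
  have h2 := hover yhi ⟨hlt.le, le_refl _⟩
  have hd : (0:ℝ) < yhi - ylo := by linarith
  rw [div_mul_eq_mul_div, ← add_div, div_le_iff₀ hd]
  nlinarith [mul_nonneg (sub_nonneg.2 hy.1) (by linarith : (0:ℝ) ≤ a * yhi + b - |yhi|),
    mul_nonneg (sub_nonneg.2 hy.2) (by linarith : (0:ℝ) ≤ a * ylo + b - |ylo|)]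
end

section
/- Let H̲, H̄ be symmetric n×n real matrices with H̲ ≤ H̄ entrywise, d a positive vector, and define α_i = max{0, −(1/2)(H̲_{ii} − Σ_{j≠i} max(|H̲_{ij}|, |H̄_{ij}|) d_j / d_i)}. Then for every symmetric matrix H with H̲ ≤ H ≤ H̄ entrywise, the matrix H + 2·diag(α) is positive semidefinite. -/
theorem stmt_5 (n : ℕ) (Hlo Hhi H : Matrix (Fin n) (Fin n) ℝ)
    (hHloS : Hlo.IsSymm) (hHhiS : Hhi.IsSymm) (hHS : H.IsSymm)
    (hle : ∀ i j, Hlo i j ≤ Hhi i j)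
    (d : Fin n → ℝ) (hd : ∀ i, 0 < d i)
    (α : Fin n → ℝ)
    (hα : ∀ i, α i = max 0 (-(1/2) * (Hlo i i -
      ∑ j ∈ Finset.univ.erase i, max |Hlo i j| |Hhi i j| * d j / d i)))
    (hH : ∀ i j, Hlo i j ≤ H i j ∧ H i j ≤ Hhi i j) :
    (H + 2 • Matrix.diagonal α).PosSemidef := by
  classical
  have habs : ∀ i j, |H i j| ≤ max |Hlo i j| |Hhi i j| := by
    intro i j
    rcases hH i j with ⟨h1, h2⟩
    rw [abs_le]
    refine ⟨?_, ?_⟩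
    · have h3 := neg_abs_le (Hlo i j)
      have h4 := le_max_left |Hlo i j| |Hhi i j|
      linarith
    · have h3 := le_abs_self (Hhi i j)
      have h4 := le_max_right |Hlo i j| |Hhi i j|
      linarith
  have hkey : ∀ i, ∑ j ∈ Finset.univ.erase i, |H i j| * d j / d i ≤ H i i + 2 * α i := by
    intro i
    have hs : ∑ j ∈ Finset.univ.erase i, |H i j| * d j / d i
        ≤ ∑ j ∈ Finset.univ.erase i, max |Hlo i j| |Hhi i j| * d j / d i := by
      apply Finset.sum_le_sum
      intro j _
      have h := habs i j
      have hdj := (hd j).le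
      have hdi := hd i
      gcongr
    have hαi : -(1/2) * (Hlo i i -
        ∑ j ∈ Finset.univ.erase i, max |Hlo i j| |Hhi i j| * d j / d i) ≤ α i := by
      rw [hα i]; exact le_max_right _ _
    have hHi := (hH i i).1
    linarith
  rw [Matrix.posSemidef_iff_dotProduct_mulVec]
  constructor
  · show Matrix.conjTranspose (H + 2 • Matrix.diagonal α) = _
    rw [Matrix.conjTranspose_eq_transpose_of_trivial, Matrix.transpose_add,
      Matrix.transpose_smul, Matrix.diagonal_transpose, hHS]
  · intro x
    have hstar : star x = x := rfl
    rw [hstar]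
    have hM : ∀ i j, (H + 2 • Matrix.diagonal α) i j
        = H i j + 2 * (if i = j then α i else 0) := by
      intro i j
      rw [Matrix.add_apply, Matrix.smul_apply, Matrix.diagonal_apply, two_nsmul]
      split_ifs <;> ring
    have hexp : dotProduct x ((H + 2 • Matrix.diagonal α).mulVec x)
        = ∑ i, ((H i i + 2 * α i) * x i ^ 2
            + ∑ j ∈ Finset.univ.erase i, x i * (H i j * x j)) := by
      simp only [dotProduct, Matrix.mulVec, dotProduct]
      refine Finset.sum_congr rfl fun i _ => ?_
      rw [Finset.mul_sum, ← Finset.add_sum_erase _ _ (Finset.mem_univ i)]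
      congr 1
      · rw [hM i i]; simp; ring
      · refine Finset.sum_congr rfl fun j hj => ?_
        rw [hM i j, if_neg (Ne.symm (Finset.ne_of_mem_erase hj))]
        ring
    rw [hexp]
    set f : Fin n → Fin n → ℝ := fun i j => |H i j| * (d j / d i) * x i ^ 2 with hf
    set g : Fin n → Fin n → ℝ := fun i j => |H i j| * (d i / d j) * x j ^ 2 with hg
    -- pairwise bound
    have hpair : ∀ i j : Fin n, -((f i j + g i j) / 2) ≤ x i * (H i j * x j) := by
      intro i j
      simp only [hf, hg]
      set a := d j / d i with ha_def
      set b := d i / d j with hb_def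
      have ha : 0 < a := div_pos (hd j) (hd i)
      have hb : 0 < b := div_pos (hd i) (hd j)
      have hab : a * b = 1 := by
        rw [ha_def, hb_def, div_mul_div_comm, mul_comm]
        exact div_self (mul_pos (hd i) (hd j)).ne'
      have hs : Real.sqrt a * Real.sqrt b = 1 := by
        rw [← Real.sqrt_mul ha.le, hab, Real.sqrt_one]
      have key : 2 * |x i * x j| ≤ a * x i ^ 2 + b * x j ^ 2 := by
        have h1 := sq_nonneg (Real.sqrt a * |x i| - Real.sqrt b * |x j|)
        have h2 : Real.sqrt a ^ 2 = a := Real.sq_sqrt ha.le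
        have h3 : Real.sqrt b ^ 2 = b := Real.sq_sqrt hb.le
        have h4 : |x i| ^ 2 = x i ^ 2 := sq_abs _
        have h5 : |x j| ^ 2 = x j ^ 2 := sq_abs _
        have h6 : |x i * x j| = |x i| * |x j| := abs_mul _ _
        have hs2 : Real.sqrt a * Real.sqrt b * (|x i| * |x j|) = |x i| * |x j| := by
          rw [hs, one_mul]
        nlinarith [h1, hs2]
      have h2 : |H i j| * (2 * |x i * x j|) ≤ |H i j| * (a * x i ^ 2 + b * x j ^ 2) :=
        mul_le_mul_of_nonneg_left key (abs_nonneg _)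
      have h3 := neg_abs_le (H i j * (x i * x j))
      rw [abs_mul] at h3
      nlinarith [h2, h3]
    -- symmetry of double sums
    have hT2 : (∑ i, ∑ j ∈ Finset.univ.erase i, g i j)
        = ∑ i, ∑ j ∈ Finset.univ.erase i, f i j := by
      have e1 : (∑ i, ∑ j ∈ Finset.univ.erase i, g i j)
          = (∑ i, ∑ j, g i j) - ∑ i, g i i := by
        rw [← Finset.sum_sub_distrib]
        exact Finset.sum_congr rfl fun i _ => Finset.sum_erase_eq_sub (Finset.mem_univ i)
      have e2 : (∑ i, ∑ j, g i j) = ∑ j, ∑ i, g i j := Finset.sum_comm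
      have e3 : (∑ j, ∑ i, g i j) - ∑ j, g j j
          = ∑ j, ∑ i ∈ Finset.univ.erase j, g i j := by
        rw [← Finset.sum_sub_distrib]
        exact Finset.sum_congr rfl fun j _ =>
          (Finset.sum_erase_eq_sub (Finset.mem_univ j)).symm
      rw [e1, e2, e3]
      refine Finset.sum_congr rfl fun i _ => Finset.sum_congr rfl fun j hj => ?_
      simp only [hf, hg]
      rw [hHS.apply]
    -- combine
    have hstep : ∑ i, ((H i i + 2 * α i) * x i ^ 2
          + ∑ j ∈ Finset.univ.erase i, (-((f i j + g i j) / 2)))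
        ≤ ∑ i, ((H i i + 2 * α i) * x i ^ 2
          + ∑ j ∈ Finset.univ.erase i, x i * (H i j * x j)) := by
      refine Finset.sum_le_sum fun i _ => add_le_add_right ?_ _
      exact Finset.sum_le_sum fun j _ => hpair i j
    refine le_trans ?_ hstep
    have per : ∀ i, (∑ j ∈ Finset.univ.erase i, -((f i j + g i j) / 2))
        = -(((∑ j ∈ Finset.univ.erase i, f i j)
            + ∑ j ∈ Finset.univ.erase i, g i j) / 2) := by
      intro i
      rw [← Finset.sum_add_distrib, Finset.sum_neg_distrib, Finset.sum_div]
    have t2' : (∑ i, -(((∑ j ∈ Finset.univ.erase i, f i j)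
            + ∑ j ∈ Finset.univ.erase i, g i j) / 2))
        = -(((∑ i, ∑ j ∈ Finset.univ.erase i, f i j)
            + ∑ i, ∑ j ∈ Finset.univ.erase i, g i j) / 2) := by
      rw [← Finset.sum_add_distrib, Finset.sum_neg_distrib, Finset.sum_div]
    have hL : ∑ i, ((H i i + 2 * α i) * x i ^ 2
          + ∑ j ∈ Finset.univ.erase i, (-((f i j + g i j) / 2)))
        = ∑ i, ((H i i + 2 * α i) * x i ^ 2)
          - ((∑ i, ∑ j ∈ Finset.univ.erase i, f i j)
            + (∑ i, ∑ j ∈ Finset.univ.erase i, g i j)) / 2 := by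
      rw [Finset.sum_add_distrib]
      rw [Finset.sum_congr rfl fun i _ => per i, t2']
      ring
    rw [hL, hT2]
    have hf1 : ∀ i, ∑ j ∈ Finset.univ.erase i, f i j
        = (∑ j ∈ Finset.univ.erase i, |H i j| * d j / d i) * x i ^ 2 := by
      intro i
      rw [Finset.sum_mul]
      exact Finset.sum_congr rfl fun j _ => by rw [hf]; ring
    have hnn : 0 ≤ ∑ i, ((H i i + 2 * α i)
        - ∑ j ∈ Finset.univ.erase i, |H i j| * d j / d i) * x i ^ 2 := by
      refine Finset.sum_nonneg fun i _ => mul_nonneg ?_ (sq_nonneg _)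
      linarith [hkey i]
    have e : ∑ i, ((H i i + 2 * α i)
          - ∑ j ∈ Finset.univ.erase i, |H i j| * d j / d i) * x i ^ 2
        = ∑ i, ((H i i + 2 * α i) * x i ^ 2 - ∑ j ∈ Finset.univ.erase i, f i j) :=
      Finset.sum_congr rfl fun i _ => by rw [hf1 i]; ring
    rw [e, Finset.sum_sub_distrib] at hnn
    linarith [hnn]
end

section
/- Let f : ℝⁿ → ℝ be twice continuously differentiable on a convex open set containing the box X, and α ∈ ℝⁿ nonnegative. If for every x ∈ X the matrix ∇²f(x) + 2·diag(α) is positive semidefinite, then g(x) = f(x) − Σ_i α_i (x̄_i − x_i)(x_i − x̲_i) is convex on X. -/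
open Matrix in
lemma aux_quad_expand (n : ℕ) (H : Matrix (Fin n) (Fin n) ℝ) (α v : Fin n → ℝ) :
    star v ⬝ᵥ ((H + 2 • Matrix.diagonal α) *ᵥ v)
      = (∑ i, ∑ j, v i * (v j * H i j)) + ∑ i, 2 * α i * v i ^ 2 := by
  have key : ∀ i, v i * ((H + 2 • Matrix.diagonal α) *ᵥ v) i
      = (∑ j, v i * (v j * H i j)) + 2 * α i * v i ^ 2 := by
    intro i
    calc v i * ((H + 2 • Matrix.diagonal α) *ᵥ v) i
        = ∑ j, (v i * (v j * H i j) + (if i = j then 2 * α j * v i * v j else 0)) := by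
          simp only [Matrix.mulVec, dotProduct, Matrix.add_apply, Matrix.smul_apply,
            Matrix.diagonal_apply, smul_eq_mul, Finset.mul_sum]
          refine Finset.sum_congr rfl fun j _ => ?_
          split_ifs with h
          · subst h; ring
          · ring
      _ = (∑ j, v i * (v j * H i j)) + 2 * α i * v i ^ 2 := by
          rw [Finset.sum_add_distrib, Finset.sum_ite_eq Finset.univ i]
          simp only [Finset.mem_univ, if_true]
          ring
  calc star v ⬝ᵥ ((H + 2 • Matrix.diagonal α) *ᵥ v)
      = ∑ i, v i * ((H + 2 • Matrix.diagonal α) *ᵥ v) i := by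
        simp [dotProduct]
    _ = ∑ i, ((∑ j, v i * (v j * H i j)) + 2 * α i * v i ^ 2) :=
        Finset.sum_congr rfl fun i _ => key i
    _ = _ := Finset.sum_add_distrib

lemma aux_bilin_expand (n : ℕ) (B : (Fin n → ℝ) →L[ℝ] ((Fin n → ℝ) →L[ℝ] ℝ)) (v : Fin n → ℝ) :
    B v v = ∑ i, ∑ j, v i * (v j * B (Pi.single i 1) (Pi.single j 1)) := by
  have hvexp : v = ∑ i, v i • (Pi.single i 1 : Fin n → ℝ) := by
    conv_lhs => rw [← Finset.univ_sum_single v]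
    refine Finset.sum_congr rfl fun i _ => ?_
    ext j; simp [Pi.single_apply]
  have h1 : ∀ w : Fin n → ℝ, B v w = ∑ i, v i • B (Pi.single i 1) w := by
    intro w
    conv_lhs => rw [hvexp]
    rw [map_sum, ContinuousLinearMap.sum_apply]
    exact Finset.sum_congr rfl fun i _ => by rw [map_smul, ContinuousLinearMap.smul_apply]
  have h2 : ∀ L : (Fin n → ℝ) →L[ℝ] ℝ, L v = ∑ j, v j • L (Pi.single j 1) := by
    intro L
    conv_lhs => rw [hvexp]
    rw [map_sum]
    exact Finset.sum_congr rfl fun j _ => by rw [map_smul]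
  rw [h1 v]
  refine Finset.sum_congr rfl fun i _ => ?_
  rw [h2 (B (Pi.single i 1))]
  rw [smul_eq_mul, Finset.mul_sum]
  exact Finset.sum_congr rfl fun j _ => by rw [smul_eq_mul]

theorem stmt_7 (n : ℕ) (f : (Fin n → ℝ) → ℝ)
    (U : Set (Fin n → ℝ)) (hUo : IsOpen U) (hUc : Convex ℝ U)
    (xlo xhi : Fin n → ℝ)
    (X : Set (Fin n → ℝ))
    (hX : X = Set.univ.pi (fun i => Set.Icc (xlo i) (xhi i)))
    (hXU : X ⊆ U)
    (hf : ContDiffOn ℝ 2 f U)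
    (α : Fin n → ℝ) (hα : ∀ i, 0 ≤ α i)
    (hess : ∀ x ∈ X,
      (Matrix.of (fun i j : Fin n =>
          fderiv ℝ (fun y => fderiv ℝ f y (Pi.single j 1)) x (Pi.single i 1))
        + 2 • Matrix.diagonal α).PosSemidef)
    (g : (Fin n → ℝ) → ℝ)
    (hg : ∀ x, g x = f x - ∑ i, α i * (xhi i - x i) * (x i - xlo i)) :
    ConvexOn ℝ X g := by
  have hXc : Convex ℝ X := hX ▸ convex_pi (fun i _ => convex_Icc _ _)
  have hgc : ContinuousOn g X := by
    have h1 : ContinuousOn (fun x => f x - ∑ i, α i * (xhi i - x i) * (x i - xlo i)) X := by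
      apply ContinuousOn.sub (hf.continuousOn.mono hXU)
      fun_prop
    exact h1.congr (fun x _ => hg x)
  refine ⟨hXc, ?_⟩
  intro x hx y hy a b ha hb hab
  set v : Fin n → ℝ := y - x with hv
  set c : ℝ → (Fin n → ℝ) := fun t => x + t • v with hcdef
  have hc : ∀ t : ℝ, HasDerivAt c v t := by
    intro t
    have h := ((hasDerivAt_id t).smul_const v).const_add x
    simpa [hcdef] using h
  have hceq : ∀ t : ℝ, c t = (1 - t) • x + t • y := by
    intro t; funext i
    simp only [hcdef, hv, Pi.add_apply, Pi.smul_apply, Pi.sub_apply, smul_eq_mul]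
    ring
  have hcX : ∀ t ∈ Set.Icc (0 : ℝ) 1, c t ∈ X := by
    intro t ht
    rw [hceq]
    exact hXc hx hy (by linarith [ht.2]) ht.1 (by ring)
  have hci : ∀ (t : ℝ) (i : Fin n), c t i = x i + t * v i := by
    intro t i; simp [hcdef]
  set B : (Fin n → ℝ) → ((Fin n → ℝ) →L[ℝ] ((Fin n → ℝ) →L[ℝ] ℝ)) :=
    fun z => fderiv ℝ (fderiv ℝ f) z with hBdef
  -- the composed function and its derivatives
  set φ : ℝ → ℝ := fun t => g (c t) with hφdef
  set Q1 : ℝ → ℝ := fun t => ∑ i,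
    ((α i * (-v i)) * ((x i + t * v i) - xlo i) + (α i * (xhi i - (x i + t * v i))) * v i)
    with hQ1def
  set Q2 : ℝ → ℝ := fun _ => ∑ i, ((α i * (-v i)) * v i + (α i * (-v i)) * v i) with hQ2def
  set φ' : ℝ → ℝ := fun t => fderiv ℝ f (c t) v - Q1 t with hφ'def
  set φ'' : ℝ → ℝ := fun t => B (c t) v v - Q2 t with hφ''def
  have hφeq : φ = fun t => f (c t) - ∑ i, (α i * (xhi i - (x i + t * v i))) * ((x i + t * v i) - xlo i) := by
    funext t
    show g (c t) = _
    rw [hg (c t)]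
    simp only [hci]
  -- basic per-point facts on the segment
  have hfat : ∀ t ∈ Set.Icc (0 : ℝ) 1, ContDiffAt ℝ 2 f (c t) := by
    intro t ht
    exact hf.contDiffAt (hUo.mem_nhds (hXU (hcX t ht)))
  have hq1 : ∀ t : ℝ, HasDerivAt (fun s => ∑ i,
      (α i * (xhi i - (x i + s * v i))) * ((x i + s * v i) - xlo i)) (Q1 t) t := by
    intro t
    rw [hQ1def]
    apply HasDerivAt.fun_sum
    intro i _
    have h1 : HasDerivAt (fun s : ℝ => x i + s * v i) (v i) t := by
      simpa using ((hasDerivAt_id t).mul_const (v i)).const_add (x i)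
    have h2 : HasDerivAt (fun s : ℝ => α i * (xhi i - (x i + s * v i))) (α i * (-v i)) t :=
      (((hasDerivAt_const t (xhi i)).sub h1).const_mul (α i)).congr_deriv (by ring)
    have h3 : HasDerivAt (fun s : ℝ => (x i + s * v i) - xlo i) (v i) t := h1.sub_const _
    exact (h2.mul h3).congr_deriv (by ring)
  have hq2 : ∀ t : ℝ, HasDerivAt Q1 (Q2 t) t := by
    intro t
    rw [hQ1def, hQ2def]
    apply HasDerivAt.fun_sum
    intro i _
    have h1 : HasDerivAt (fun s : ℝ => x i + s * v i) (v i) t := by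
      simpa using ((hasDerivAt_id t).mul_const (v i)).const_add (x i)
    have h2 : HasDerivAt (fun s : ℝ => (α i * (-v i)) * ((x i + s * v i) - xlo i))
        ((α i * (-v i)) * v i) t :=
      ((h1.sub_const _).const_mul _).congr_deriv (by ring)
    have h3 : HasDerivAt (fun s : ℝ => (α i * (xhi i - (x i + s * v i))) * v i)
        ((α i * (-v i)) * v i) t := by
      have := (((hasDerivAt_const t (xhi i)).sub h1).const_mul (α i)).mul_const (v i)
      exact this.congr_deriv (by ring)
    exact h2.add h3
  have hd1 : ∀ t ∈ Set.Icc (0 : ℝ) 1, HasDerivAt φ (φ' t) t := by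
    intro t ht
    rw [hφeq, hφ'def]
    refine HasDerivAt.sub ?_ (hq1 t)
    have hF : HasFDerivAt f (fderiv ℝ f (c t)) (c t) :=
      (((hfat t ht).differentiableAt (by norm_num))).hasFDerivAt
    exact hF.comp_hasDerivAt t (hc t)
  have hd2 : ∀ t ∈ Set.Icc (0 : ℝ) 1, HasDerivAt φ' (φ'' t) t := by
    intro t ht
    rw [hφ'def, hφ''def]
    refine HasDerivAt.sub ?_ (hq2 t)
    have hB : HasFDerivAt (fderiv ℝ f) (B (c t)) (c t) :=
      (((hfat t ht).fderiv_right (m := 1) (by norm_num)).differentiableAt one_ne_zero).hasFDerivAt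
    have h1 : HasDerivAt (fun s => fderiv ℝ f (c s)) (B (c t) v) t :=
      hB.comp_hasDerivAt t (hc t)
    have h2 := h1.clm_apply (hasDerivAt_const t v)
    simpa using h2
  -- positivity of the second derivative on the segment
  have hpos : ∀ t ∈ Set.Icc (0 : ℝ) 1, 0 ≤ φ'' t := by
    intro t ht
    have hzX : c t ∈ X := hcX t ht
    have hB : HasFDerivAt (fderiv ℝ f) (B (c t)) (c t) :=
      (((hfat t ht).fderiv_right (m := 1) (by norm_num)).differentiableAt one_ne_zero).hasFDerivAt
    have hentry : ∀ i j : Fin n,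
        fderiv ℝ (fun y => fderiv ℝ f y (Pi.single j 1)) (c t) (Pi.single i 1)
          = B (c t) (Pi.single i 1) (Pi.single j 1) := by
      intro i j
      have h := (ContinuousLinearMap.apply ℝ ℝ (Pi.single j 1 : Fin n → ℝ)).hasFDerivAt.comp (c t) hB
      have h2 : fderiv ℝ (fun y => fderiv ℝ f y (Pi.single j 1)) (c t)
          = (ContinuousLinearMap.apply ℝ ℝ (Pi.single j 1 : Fin n → ℝ)).comp (B (c t)) := h.fderiv
      rw [h2]; rfl
    have hq := (Matrix.posSemidef_iff_dotProduct_mulVec.mp (hess (c t) hzX)).2 v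
    rw [aux_quad_expand] at hq
    have hAA : (∑ i, ∑ j, v i * (v j * (Matrix.of fun i j =>
          fderiv ℝ (fun y => fderiv ℝ f y (Pi.single j 1)) (c t) (Pi.single i 1)) i j))
        = ∑ i, ∑ j, v i * (v j * B (c t) (Pi.single i 1) (Pi.single j 1)) :=
      Finset.sum_congr rfl fun i _ => Finset.sum_congr rfl fun j _ => by
        rw [Matrix.of_apply, hentry i j]
    rw [hAA] at hq
    have hQ2v : Q2 t = -∑ i, 2 * α i * v i ^ 2 := by
      show (∑ i, ((α i * (-v i)) * v i + (α i * (-v i)) * v i)) = _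
      rw [← Finset.sum_neg_distrib]
      exact Finset.sum_congr rfl fun i _ => by ring
    have hφval : φ'' t = (∑ i, ∑ j, v i * (v j * B (c t) (Pi.single i 1) (Pi.single j 1)))
        + ∑ i, 2 * α i * v i ^ 2 := by
      show B (c t) v v - Q2 t = _
      rw [aux_bilin_expand n (B (c t)) v, hQ2v, sub_neg_eq_add]
    rw [hφval]
    exact hq
  -- convexity of the 1D restriction
  have hφc : ContinuousOn φ (Set.Icc (0 : ℝ) 1) := by
    have hcc : Continuous c := by fun_prop
    exact hgc.comp hcc.continuousOn hcX
  have hconv : ConvexOn ℝ (Set.Icc (0 : ℝ) 1) φ := by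
    apply convexOn_of_hasDerivWithinAt2_nonneg (convex_Icc 0 1) hφc
    · intro t ht
      rw [interior_Icc] at ht
      exact (hd1 t (Set.Ioo_subset_Icc_self ht)).hasDerivWithinAt
    · intro t ht
      rw [interior_Icc] at ht
      exact (hd2 t (Set.Ioo_subset_Icc_self ht)).hasDerivWithinAt
    · intro t ht
      rw [interior_Icc] at ht
      exact hpos t (Set.Ioo_subset_Icc_self ht)
  -- conclude
  have h01 : (0 : ℝ) ∈ Set.Icc (0 : ℝ) 1 := by norm_num
  have h11 : (1 : ℝ) ∈ Set.Icc (0 : ℝ) 1 := by norm_num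
  have key := hconv.2 h01 h11 ha hb hab
  have e1 : a • (0 : ℝ) + b • 1 = b := by simp
  have e2 : φ 0 = g x := by
    show g (c 0) = g x
    congr 1
    funext i; rw [hci]; ring
  have e3 : φ 1 = g y := by
    show g (c 1) = g y
    congr 1
    funext i; rw [hci]; simp [hv]
  have e4 : c b = a • x + b • y := by
    funext i
    rw [hci]
    simp only [Pi.add_apply, Pi.smul_apply, smul_eq_mul, hv, Pi.sub_apply]
    have hba : a = 1 - b := by linarith
    rw [hba]; ring
  rw [e1, e2, e3] at key
  calc g (a • x + b • y) = φ b := by show _ = g (c b); rw [e4]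
    _ ≤ a * g x + b * g y := key
    _ = a • g x + b • g y := by simp
end
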